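/- For a mixture-of-unitaries channel Λ_MU(ρ) = Σᵢ qᵢ Uᵢ ρ Uᵢ†, there exists a MIO channel Λ_MIO with Λ_MIO(ρ_max) = Λ_MU(ρ_max), where ρ_max = Σₙ pₙ|n₊⟩⟨n₊| is diagonal in a basis mutually unbiased to the incoherent basis. -/

import Mathlib

open Matrix BigOperators
open scoped ComplexOrder

noncomputable section

/-- A density matrix: positive semidefinite with unit trace. -/
def IsDensity {n : Type*} [Fintype n] (ρ : Matrix n n ℂ) : Prop :=
  ρ.PosSemidef ∧ ρ.trace = 1

/-- A quantum channel (CPTP map), given via a Kraus representation. -/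
def IsChannel {m n : Type*} [Fintype m] [Fintype n] [DecidableEq m]
    (Λ : Matrix m m ℂ → Matrix n n ℂ) : Prop :=
  ∃ (k : ℕ) (K : Fin k → Matrix n m ℂ),
    (∑ i, (K i)ᴴ * K i) = 1 ∧ ∀ ρ, Λ ρ = ∑ i, K i * ρ * (K i)ᴴ

/-- A maximally incoherent operation: maps every incoherent (diagonal) state to an
incoherent state.  The incoherent basis is fixed to be the standard basis. -/
def IsMIO {n : Type*} [Fintype n] (Λ : Matrix n n ℂ → Matrix n n ℂ) : Prop :=
  ∀ σ, IsDensity σ → σ.IsDiag → (Λ σ).IsDiag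

/-- for any mixture-of-unitaries channel `Λ_MU(ρ) = Σᵢ qᵢ Uᵢ ρ Uᵢ†`, there
is a MIO channel agreeing with `Λ_MU` on the maximally coherent mixed state
`ρ_max = Σₙ pₙ|n₊⟩⟨n₊|` (diagonal in a basis mutually unbiased to the incoherent one). -/
theorem mixture_of_unitaries_on_mcms_via_MIO (d : ℕ) (hd : 0 < d)
    (b : Fin d → Fin d → ℂ)
    (hortho : ∀ n m, star (b n) ⬝ᵥ b m = if n = m then 1 else 0)
    (hmub : ∀ i n, ‖b n i‖ ^ 2 = (d : ℝ)⁻¹)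
    (p : Fin d → ℝ) (hp0 : ∀ n, 0 ≤ p n) (hp1 : ∑ n, p n = 1)
    (ρmax : Matrix (Fin d) (Fin d) ℂ)
    (hρmax : ρmax = ∑ n, (p n : ℂ) • vecMulVec (b n) (star (b n)))
    (k : ℕ) (q : Fin k → ℝ) (hq0 : ∀ i, 0 ≤ q i) (hq1 : ∑ i, q i = 1)
    (U : Fin k → Matrix (Fin d) (Fin d) ℂ)
    (hU : ∀ i, U i ∈ Matrix.unitaryGroup (Fin d) ℂ) :
    ∃ Λ : Matrix (Fin d) (Fin d) ℂ → Matrix (Fin d) (Fin d) ℂ,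
      IsChannel Λ ∧ IsMIO Λ ∧
      Λ ρmax = ∑ i, (q i : ℂ) • (U i * ρmax * (U i)ᴴ) := by
  classical
  set P : Fin d → Matrix (Fin d) (Fin d) ℂ := fun n => vecMulVec (b n) (star (b n)) with hPdef
  have hPH : ∀ n, (P n)ᴴ = P n := by
    intro n; ext i j
    simp [P, conjTranspose_apply, vecMulVec_apply, mul_comm]
  have hPmul : ∀ n m, P n * P m = if n = m then P n else 0 := by
    intro n m
    ext i j
    have h : (P n * P m) i j = (star (b n) ⬝ᵥ b m) * (b n i * star (b m j)) := by
      simp only [P, mul_apply, vecMulVec_apply, dotProduct, Finset.sum_mul, Pi.star_apply]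
      exact Finset.sum_congr rfl fun a _ => by ring
    rw [h, hortho]
    by_cases hnm : n = m
    · subst hnm; simp [P, vecMulVec_apply]
    · simp [hnm]
  have hPsum : (∑ n, P n) = 1 := by
    set V : Matrix (Fin d) (Fin d) ℂ := Matrix.of fun i n => b n i with hV
    have h1 : Vᴴ * V = 1 := by
      ext n m
      have := hortho n m
      simp only [dotProduct, Pi.star_apply] at this
      simp only [mul_apply, conjTranspose_apply, of_apply, one_apply, V]
      simpa using this
    have h2 : V * Vᴴ = 1 := mul_eq_one_comm.mp h1
    ext i j
    have := congrFun (congrFun h2 i) j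
    simp only [mul_apply, conjTranspose_apply, of_apply, V] at this
    simpa [Matrix.sum_apply, P, vecMulVec_apply] using this
  have hPσP : ∀ (σ : Matrix (Fin d) (Fin d) ℂ) (n : Fin d),
      P n * σ * P n = (∑ a, ∑ c, star (b n a) * σ a c * b n c) • P n := by
    intro σ n
    ext i j
    simp only [P, mul_apply, vecMulVec_apply, Pi.star_apply, Matrix.smul_apply, smul_eq_mul,
      Finset.sum_mul, Finset.mul_sum]
    rw [Finset.sum_comm]
    refine Finset.sum_congr rfl fun c _ => Finset.sum_congr rfl fun a _ => by ring
  -- value of ⟨n|σ|n⟩ for diagonal trace-one σ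
  have hdiagval : ∀ (σ : Matrix (Fin d) (Fin d) ℂ), σ.IsDiag → σ.trace = 1 →
      ∀ n, (∑ a, ∑ c, star (b n a) * σ a c * b n c) = ((d:ℝ)⁻¹ : ℂ) := by
    intro σ hσ htr n
    have step : ∀ a, (∑ c, star (b n a) * σ a c * b n c) = ((d:ℝ)⁻¹ : ℂ) * σ a a := by
      intro a
      rw [Finset.sum_eq_single a]
      · have h1 : star (b n a) * b n a = ((d:ℝ)⁻¹ : ℂ) := by
          have := Complex.mul_conj (b n a)
          rw [Complex.star_def, mul_comm, this, ← Complex.sq_norm, hmub a n]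
          push_cast
          ring
        calc star (b n a) * σ a a * b n a = star (b n a) * b n a * σ a a := by ring
          _ = ((d:ℝ)⁻¹ : ℂ) * σ a a := by rw [h1]
      · intro c _ hc
        rw [hσ (Ne.symm hc)]
        ring
      · intro h; exact absurd (Finset.mem_univ a) h
    rw [Finset.sum_congr rfl fun a _ => step a, ← Finset.mul_sum]
    have : (∑ a, σ a a) = 1 := by
      simpa [Matrix.trace, Matrix.diag] using htr
    rw [this, mul_one]
  -- Kraus operators
  set K : Fin k × Fin d → Matrix (Fin d) (Fin d) ℂ :=
    fun x => ((Real.sqrt (q x.1) : ℝ) : ℂ) • (U x.1 * P x.2) with hK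
  set Λ : Matrix (Fin d) (Fin d) ℂ → Matrix (Fin d) (Fin d) ℂ :=
    fun ρ => ∑ x : Fin k × Fin d, K x * ρ * (K x)ᴴ with hΛ
  have hKterm : ∀ (ρ : Matrix (Fin d) (Fin d) ℂ) (x : Fin k × Fin d),
      K x * ρ * (K x)ᴴ = (q x.1 : ℂ) • (U x.1 * (P x.2 * ρ * P x.2) * (U x.1)ᴴ) := by
    intro ρ x
    simp only [K, conjTranspose_smul, smul_mul_assoc, mul_smul_comm, conjTranspose_mul, hPH,
      smul_smul]
    rw [Complex.star_def, Complex.conj_ofReal, ← Complex.ofReal_mul,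
      Real.mul_self_sqrt (hq0 x.1)]
    congr 1
    noncomm_ring
  have hUU : ∀ i, (U i)ᴴ * U i = 1 := by
    intro i
    have := (hU i).1
    rwa [Matrix.star_eq_conjTranspose] at this
  have hUUc : ∀ i, U i * (U i)ᴴ = 1 := by
    intro i
    have := (hU i).2
    rwa [Matrix.star_eq_conjTranspose] at this
  have hqsum : (∑ i, ((q i : ℝ) : ℂ)) = 1 := by
    rw [← Complex.ofReal_sum, hq1, Complex.ofReal_one]
  refine ⟨Λ, ?_, ?_, ?_⟩
  · -- IsChannel
    refine ⟨k * d, fun j => K (finProdFinEquiv.symm j), ?_, ?_⟩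
    · rw [Fintype.sum_equiv finProdFinEquiv.symm _ (fun x => (K x)ᴴ * K x) (fun j => rfl)]
      have hterm : ∀ x : Fin k × Fin d, (K x)ᴴ * K x = (q x.1 : ℂ) • P x.2 := by
        intro x
        simp only [K, conjTranspose_smul, conjTranspose_mul, hPH, smul_mul_assoc,
          mul_smul_comm, smul_smul]
        rw [Complex.star_def, Complex.conj_ofReal, ← Complex.ofReal_mul,
          Real.mul_self_sqrt (hq0 x.1)]
        congr 1
        calc P x.2 * (U x.1)ᴴ * (U x.1 * P x.2) = P x.2 * ((U x.1)ᴴ * U x.1) * P x.2 := by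
              noncomm_ring
          _ = P x.2 * P x.2 := by rw [hUU]; rw [mul_one]
          _ = P x.2 := by rw [hPmul]; simp
      rw [Finset.sum_congr rfl fun x _ => hterm x, Fintype.sum_prod_type]
      calc (∑ i, ∑ n, (q i : ℂ) • P n) = ∑ i, (q i : ℂ) • ∑ n, P n := by
            simp [Finset.smul_sum]
        _ = ∑ i, (q i : ℂ) • (1 : Matrix (Fin d) (Fin d) ℂ) := by rw [hPsum]
        _ = (∑ i, ((q i : ℝ) : ℂ)) • (1 : Matrix (Fin d) (Fin d) ℂ) := by
            rw [Finset.sum_smul]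
        _ = 1 := by rw [hqsum, one_smul]
    · intro ρ
      rw [hΛ]
      exact (Fintype.sum_equiv finProdFinEquiv.symm _ _ (fun j => rfl)).symm
  · -- IsMIO
    intro σ hσ hdiag
    have hΛσ : Λ σ = ((d:ℝ)⁻¹ : ℂ) • (1 : Matrix (Fin d) (Fin d) ℂ) := by
      calc Λ σ = ∑ x : Fin k × Fin d, (q x.1 : ℂ) • (U x.1 * (P x.2 * σ * P x.2) * (U x.1)ᴴ) :=
            Finset.sum_congr rfl fun x _ => hKterm σ x
        _ = ∑ x : Fin k × Fin d, (q x.1 : ℂ) • (((d:ℝ)⁻¹ : ℂ) • (U x.1 * P x.2 * (U x.1)ᴴ)) := by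
            refine Finset.sum_congr rfl fun x _ => ?_
            rw [hPσP, hdiagval σ hdiag hσ.2, mul_smul_comm, smul_mul_assoc]
        _ = ((d:ℝ)⁻¹ : ℂ) • ∑ i, (q i : ℂ) • (U i * (∑ n, P n) * (U i)ᴴ) := by
            rw [Fintype.sum_prod_type, Finset.smul_sum]
            refine Finset.sum_congr rfl fun i _ => ?_
            rw [Matrix.mul_sum, Matrix.sum_mul, Finset.smul_sum, Finset.smul_sum]
            refine Finset.sum_congr rfl fun n _ => ?_
            rw [smul_comm]
        _ = ((d:ℝ)⁻¹ : ℂ) • (1 : Matrix (Fin d) (Fin d) ℂ) := by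
            rw [hPsum]
            congr 1
            calc (∑ i, (q i : ℂ) • (U i * 1 * (U i)ᴴ)) = ∑ i, (q i : ℂ) • (1 : Matrix (Fin d) (Fin d) ℂ) := by
                  refine Finset.sum_congr rfl fun i _ => ?_
                  rw [mul_one, hUUc]
              _ = 1 := by rw [← Finset.sum_smul, hqsum, one_smul]
    rw [hΛσ]
    exact Matrix.IsDiag.smul _ Matrix.isDiag_one
  · -- agreement on ρmax
    have hPρP : ∀ n, P n * ρmax * P n = (p n : ℂ) • P n := by
      intro n
      rw [hρmax, Matrix.mul_sum, Matrix.sum_mul]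
      rw [Finset.sum_eq_single n]
      · rw [mul_smul_comm, smul_mul_assoc, hPmul]
        simp [hPmul]
      · intro m _ hm
        rw [mul_smul_comm, smul_mul_assoc, hPmul, if_neg (Ne.symm hm)]
        simp
      · intro h; exact absurd (Finset.mem_univ n) h
    calc Λ ρmax = ∑ x : Fin k × Fin d, (q x.1 : ℂ) • (U x.1 * (P x.2 * ρmax * P x.2) * (U x.1)ᴴ) :=
          Finset.sum_congr rfl fun x _ => hKterm ρmax x
      _ = ∑ i, (q i : ℂ) • (U i * (∑ n, (p n : ℂ) • P n) * (U i)ᴴ) := by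
          rw [Fintype.sum_prod_type]
          refine Finset.sum_congr rfl fun i _ => ?_
          rw [Matrix.mul_sum, Matrix.sum_mul, Finset.smul_sum]
          refine Finset.sum_congr rfl fun n _ => ?_
          rw [hPρP]
      _ = ∑ i, (q i : ℂ) • (U i * ρmax * (U i)ᴴ) := by rw [← hρmax]
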